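/- Suppose A is a permutation of order k and Γ is an A-avoiding permuton, with a fixed disintegration {Γ_x}_{x∈[0,1]} along the first coordinate. Then for Lebesgue-almost every x ∈ [0,1], the fiber Γ_x is supported on a set of at most k−1 points. -/

import Mathlib

open MeasureTheory Set
open scoped ENNReal NNReal

/-- Geometric representations of the pattern `A`: `k`-tuples of points of the plane
with strictly increasing x-coordinates whose y-coordinates are ordered according
to `A`. -/
def patternSet {k : ℕ} (A : Equiv.Perm (Fin k)) : Set (Fin k → ℝ × ℝ) :=
  {f | StrictMono (fun i => (f i).1) ∧ ∀ i j : Fin k, A i < A j ↔ (f i).2 < (f j).2}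

/-- A strictly increasing finite tuple of reals admits a uniform gap `2δ`. -/
lemma gap_lemma {k : ℕ} (y : Fin k → ℝ) (hy : StrictMono y) :
    ∃ δ : ℝ, 0 < δ ∧ ∀ m m' : Fin k, m < m' → y m + 2 * δ ≤ y m' := by
  classical
  rcases Finset.eq_empty_or_nonempty
      (Finset.univ.filter fun p : Fin k × Fin k => p.1 < p.2) with h | h
  · refine ⟨1, one_pos, fun m m' hmm => ?_⟩
    have hmem : (m, m') ∈ Finset.univ.filter fun p : Fin k × Fin k => p.1 < p.2 :=
      Finset.mem_filter.2 ⟨Finset.mem_univ _, hmm⟩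
    rw [h] at hmem
    exact absurd hmem (Finset.notMem_empty _)
  · refine ⟨(Finset.univ.filter fun p : Fin k × Fin k => p.1 < p.2).inf' h
      (fun p => (y p.2 - y p.1) / 2), ?_, ?_⟩
    · rw [Finset.lt_inf'_iff]
      intro p hp
      have h1 : p.1 < p.2 := (Finset.mem_filter.1 hp).2
      have h2 := hy h1
      linarith
    · intro m m' hmm
      have hmem : (m, m') ∈ Finset.univ.filter fun p : Fin k × Fin k => p.1 < p.2 :=
        Finset.mem_filter.2 ⟨Finset.mem_univ _, hmm⟩
      have := Finset.inf'_le (fun p : Fin k × Fin k => (y p.2 - y p.1) / 2) hmem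
      simp only at this
      linarith

/-- If `Γ` is an `A`-avoiding permuton with disintegration `{Γx x}`,
then almost every fiber is supported on at most `k - 1` points. -/
theorem stmt5 (k : ℕ) (A : Equiv.Perm (Fin k)) (Γ : Measure (ℝ × ℝ))
    [IsProbabilityMeasure Γ]
    (hmarg : ∀ B : Set ℝ, MeasurableSet B →
      Γ (B ×ˢ univ) = volume (B ∩ Icc 0 1) ∧ Γ (univ ×ˢ B) = volume (B ∩ Icc 0 1))
    (havoid : Measure.pi (fun _ : Fin k => Γ) (patternSet A) = 0)
    (Γx : ℝ → Measure ℝ) (hmeas : Measurable Γx)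
    (hdis : ∀ B : Set (ℝ × ℝ), MeasurableSet B →
      Γ B = ∫⁻ x in Icc (0 : ℝ) 1, Γx x {y | (x, y) ∈ B}) :
    ∀ᵐ x ∂(volume.restrict (Icc (0 : ℝ) 1)),
      ∃ P : Finset ℝ, P.card ≤ k - 1 ∧ Γx x ((↑P : Set ℝ)ᶜ) = 0 := by
  classical
  -- The key step: for each fixed family of ordered disjoint rational intervals and each `n`,
  -- the set of `x ∈ [0,1]` whose fiber gives mass `≥ 1/(n+1)` to each of the
  -- `k` intervals is Lebesgue-null.
  have key : ∀ (q r : Fin k → ℚ) (n : ℕ),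
      (∀ m, q m < r m) → (∀ m m' : Fin k, m < m' → r m ≤ q m') →
      volume ({x : ℝ | ∀ m, ((n : ℝ≥0∞) + 1)⁻¹ ≤ Γx x (Ioo (q m : ℝ) (r m))} ∩ Icc 0 1)
        = 0 := by
    intro q r n hqr hsep
    by_contra hv
    set F₀ : Set ℝ :=
      {x : ℝ | ∀ m, ((n : ℝ≥0∞) + 1)⁻¹ ≤ Γx x (Ioo (q m : ℝ) (r m))} ∩ Icc 0 1 with hF₀
    have hmeasF : ∀ m : Fin k, Measurable fun x => Γx x (Ioo (q m : ℝ) (r m)) :=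
      fun m => (Measure.measurable_coe measurableSet_Ioo).comp hmeas
    have hF₀meas : MeasurableSet F₀ := by
      apply MeasurableSet.inter _ measurableSet_Icc
      have : {x : ℝ | ∀ m, ((n : ℝ≥0∞) + 1)⁻¹ ≤ Γx x (Ioo (q m : ℝ) (r m))}
          = ⋂ m : Fin k, (fun x => Γx x (Ioo (q m : ℝ) (r m))) ⁻¹' Ici (((n : ℝ≥0∞) + 1)⁻¹) := by
        ext x; simp [mem_iInter]
      rw [this]
      exact MeasurableSet.iInter fun m => (hmeasF m) measurableSet_Ici
    have hF₀sub : F₀ ⊆ Icc 0 1 := inter_subset_right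
    have hfin : volume F₀ ≠ ∞ := by
      have : volume F₀ ≤ volume (Icc (0:ℝ) 1) := measure_mono hF₀sub
      rw [Real.volume_Icc] at this
      exact ne_top_of_le_ne_top (by simp) this
    have hfin' : ∀ s : ℝ, volume (F₀ ∩ Iio s) ≠ ∞ :=
      fun s => ne_top_of_le_ne_top hfin (measure_mono inter_subset_left)
    set g : ℝ → ℝ := fun s => (volume (F₀ ∩ Iio s)).toReal with hg
    have gmono : Monotone g := by
      intro s u hsu
      exact (ENNReal.toReal_le_toReal (hfin' s) (hfin' u)).2
        (measure_mono (inter_subset_inter_right _ (Iio_subset_Iio hsu)))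
    have gstep : ∀ s u : ℝ, s ≤ u → g u ≤ g s + (u - s) := by
      intro s u hsu
      have hsub : F₀ ∩ Iio u ⊆ (F₀ ∩ Iio s) ∪ Ico s u := by
        rintro x ⟨hx, hxu⟩
        rcases lt_or_ge x s with h | h
        · exact Or.inl ⟨hx, h⟩
        · exact Or.inr ⟨h, hxu⟩
      have h1 : volume (F₀ ∩ Iio u) ≤ volume (F₀ ∩ Iio s) + volume (Ico s u) :=
        le_trans (measure_mono hsub) (measure_union_le _ _)
      rw [Real.volume_Ico] at h1
      have h2 := (ENNReal.toReal_le_toReal (hfin' u)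
        (by simp [ENNReal.add_ne_top, hfin' s])).2 h1
      rwa [ENNReal.toReal_add (hfin' s) (by simp), ENNReal.toReal_ofReal (by linarith)] at h2
    have gcont : Continuous g := by
      apply LipschitzWith.continuous (K := 1)
      apply LipschitzWith.of_dist_le_mul
      intro s u
      rcases le_total s u with h | h
      · have h1 := gstep s u h
        have h2 := gmono h
        rw [Real.dist_eq, Real.dist_eq, abs_sub_comm, abs_of_nonneg (by linarith),
          abs_of_nonpos (by linarith)]
        simp only [NNReal.coe_one, one_mul]
        linarith
      · have h1 := gstep u s h
        have h2 := gmono h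
        rw [Real.dist_eq, Real.dist_eq, abs_of_nonneg (by linarith),
          abs_of_nonneg (by linarith)]
        simp only [NNReal.coe_one, one_mul]
        linarith
    have gneg : g (-1) = 0 := by
      have h0 : F₀ ∩ Iio (-1 : ℝ) = ∅ := by
        apply eq_empty_of_forall_notMem
        rintro x ⟨hx, hx'⟩
        have := (hF₀sub hx).1
        simp only [mem_Iio] at hx'
        linarith
      simp [hg, h0]
    set vR : ℝ := (volume F₀).toReal with hvR
    have gtwo : g 2 = vR := by
      have h0 : F₀ ∩ Iio (2 : ℝ) = F₀ := by
        apply inter_eq_self_of_subset_left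
        intro x hx
        have := (hF₀sub hx).2
        simp only [mem_Iio]; linarith
      simp [hg, h0, hvR]
    have hvRpos : 0 < vR := ENNReal.toReal_pos hv hfin
    -- choose the cut points by the intermediate value theorem
    have hts : ∀ i : ℕ, ∃ s ∈ Icc (-1 : ℝ) 2, g s = (min i k : ℝ) * vR / k := by
      intro i
      have hval : (min i k : ℝ) * vR / k ∈ Icc (g (-1)) (g 2) := by
        rw [gneg, gtwo]
        constructor
        · positivity
        · rcases Nat.eq_zero_or_pos k with hk | hk
          · simp only [hk]
            simp
            positivity
          · rw [div_le_iff₀ (by positivity : (0:ℝ) < (k:ℝ))]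
            have hle : (min i k : ℝ) ≤ (k : ℝ) := by
              exact_mod_cast Nat.cast_le.2 (min_le_right i k)
            nlinarith
      obtain ⟨s, hs, hs'⟩ :=
        intermediate_value_Icc (by norm_num : (-1:ℝ) ≤ 2) gcont.continuousOn hval
      exact ⟨s, hs, hs'⟩
    choose t ht1 ht2 using hts
    have tval : ∀ i : ℕ, i ≤ k → g (t i) = (i : ℝ) * vR / k := by
      intro i hi
      rw [ht2 i, min_eq_left (show (i:ℝ) ≤ (k:ℝ) by exact_mod_cast hi)]
    have tmono : ∀ i j : ℕ, i < j → j ≤ k → t i < t j := by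
      intro i j hij hjk
      have hk : 0 < k := lt_of_lt_of_le (Nat.lt_of_le_of_lt (Nat.zero_le i) hij) hjk
      have h1 : g (t i) < g (t j) := by
        rw [tval i (le_trans (le_of_lt hij) hjk), tval j hjk]
        rw [div_lt_div_iff_of_pos_right (by positivity : (0:ℝ) < (k:ℝ))]
        exact mul_lt_mul_of_pos_right (by exact_mod_cast hij) hvRpos
      by_contra h
      push_neg at h
      exact absurd (gmono h) (not_le.2 h1)
    -- the slices
    set Fi : Fin k → Set ℝ := fun i => F₀ ∩ Ico (t i) (t (i + 1)) with hFi
    have hFimeas : ∀ i : Fin k, MeasurableSet (Fi i) :=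
      fun i => hF₀meas.inter measurableSet_Ico
    have hFipos : ∀ i : Fin k, volume (Fi i) ≠ 0 := by
      intro i
      have hik : (i : ℕ) + 1 ≤ k := i.2
      have hk : 0 < k := lt_of_lt_of_le (Nat.succ_pos _) hik
      have hsub : F₀ ∩ Iio (t ((i : ℕ) + 1)) ⊆ (F₀ ∩ Iio (t (i : ℕ))) ∪ Fi i := by
        rintro x ⟨hx, hxu⟩
        rcases lt_or_ge x (t (i : ℕ)) with h | h
        · exact Or.inl ⟨hx, h⟩
        · exact Or.inr ⟨hx, h, hxu⟩
      have hFifin : volume (Fi i) ≠ ∞ :=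
        ne_top_of_le_ne_top hfin (measure_mono inter_subset_left)
      have h1 : volume (F₀ ∩ Iio (t ((i : ℕ) + 1)))
          ≤ volume (F₀ ∩ Iio (t (i : ℕ))) + volume (Fi i) :=
        le_trans (measure_mono hsub) (measure_union_le _ _)
      have h2 := (ENNReal.toReal_le_toReal (hfin' _)
        (by simp [ENNReal.add_ne_top, hfin' _, hFifin])).2 h1
      rw [ENNReal.toReal_add (hfin' _) hFifin] at h2
      have e1 : (volume (F₀ ∩ Iio (t ((i : ℕ) + 1)))).toReal = ((i:ℕ) + 1 : ℝ) * vR / k := by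
        have := tval ((i : ℕ) + 1) hik
        rw [hg] at this
        simpa using this
      have e2 : (volume (F₀ ∩ Iio (t (i : ℕ)))).toReal = ((i:ℕ) : ℝ) * vR / k := by
        have := tval (i : ℕ) (le_trans (Nat.le_succ _) hik)
        rw [hg] at this
        simpa using this
      rw [e1, e2] at h2
      intro h0
      rw [h0] at h2
      simp only [ENNReal.toReal_zero, add_zero] at h2
      have hkpos : (0:ℝ) < k := by exact_mod_cast hk
      rw [div_le_div_iff_of_pos_right hkpos] at h2
      nlinarith
    -- the mass of each box in `Γ`
    have hbox : ∀ i : Fin k,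
        Γ ((Fi i) ×ˢ Ioo ((q (A i) : ℝ)) ((r (A i) : ℝ))) ≠ 0 := by
      intro i
      set J : Set ℝ := Ioo ((q (A i) : ℝ)) ((r (A i) : ℝ)) with hJ
      rw [hdis _ ((hFimeas i).prod measurableSet_Ioo)]
      have hFisub : Fi i ⊆ Icc 0 1 := fun x hx => hF₀sub hx.1
      have hstep1 : ∫⁻ x in Fi i, Γx x {y | (x, y) ∈ (Fi i) ×ˢ J}
          ≤ ∫⁻ x in Icc (0:ℝ) 1, Γx x {y | (x, y) ∈ (Fi i) ×ˢ J} :=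
        lintegral_mono_set hFisub
      have hstep2 : ∫⁻ x in Fi i, Γx x {y | (x, y) ∈ (Fi i) ×ˢ J}
          = ∫⁻ x in Fi i, Γx x J := by
        apply setLIntegral_congr_fun (hFimeas i)
        intro x hx
        show Γx x {y | (x, y) ∈ (Fi i) ×ˢ J} = Γx x J
        congr 1
        ext y
        simp [Set.mem_prod, hx]
      have hstep3 : ((n : ℝ≥0∞) + 1)⁻¹ * volume (Fi i) ≤ ∫⁻ x in Fi i, Γx x J := by
        rw [← setLIntegral_const]
        apply setLIntegral_mono ((Measure.measurable_coe measurableSet_Ioo).comp hmeas)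
        intro x hx
        exact hx.1.1 (A i)
      intro h0
      rw [h0] at hstep1
      have : ((n : ℝ≥0∞) + 1)⁻¹ * volume (Fi i) = 0 :=
        le_antisymm (by rw [← hstep2] at hstep3; exact le_trans hstep3 (le_trans hstep1 le_rfl)) zero_le
      rcases mul_eq_zero.1 this with h | h
      · exact absurd h (ENNReal.inv_ne_zero.2 (by simp))
      · exact hFipos i h
    -- the product box realizes the pattern `A`
    have hsub : Set.pi univ
        (fun i => (Fi i) ×ˢ Ioo ((q (A i) : ℝ)) ((r (A i) : ℝ))) ⊆ patternSet A := by
      intro f hf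
      simp only [Set.mem_pi, mem_univ, forall_true_left] at hf
      constructor
      · intro i j hij
        have hi := (hf i).1
        have hj := (hf j).1
        have h1 : (f i).1 < t ((i : ℕ) + 1) := hi.2.2
        have h2 : t (j : ℕ) ≤ (f j).1 := hj.2.1
        have h3 : t ((i : ℕ) + 1) ≤ t (j : ℕ) := by
          rcases eq_or_lt_of_le (Nat.succ_le_of_lt (Fin.lt_iff_val_lt_val.1 hij)) with h | h
          · exact le_of_eq (congrArg t (by omega))
          · exact le_of_lt (tmono _ _ (by omega) (le_of_lt j.2))
        simp only
        linarith
      · intro i j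
        constructor
        · intro hAij
          have hi := (hf i).2
          have hj := (hf j).2
          have h1 : (f i).2 < (r (A i) : ℝ) := hi.2
          have h2 : ((q (A j)) : ℝ) < (f j).2 := hj.1
          have h3 : (r (A i) : ℝ) ≤ (q (A j) : ℝ) := by
            exact_mod_cast hsep _ _ hAij
          linarith
        · intro hy
          rcases lt_trichotomy (A i) (A j) with h | h | h
          · exact h
          · exfalso
            have : i = j := A.injective h
            subst this
            exact lt_irrefl _ hy
          · exfalso
            have hi := (hf i).2
            have hj := (hf j).2
            have h1 : (f j).2 < (r (A j) : ℝ) := hj.2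
            have h2 : ((q (A i)) : ℝ) < (f i).2 := hi.1
            have h3 : (r (A j) : ℝ) ≤ (q (A i) : ℝ) := by
              exact_mod_cast hsep _ _ h
            linarith
    have hprod : Measure.pi (fun _ : Fin k => Γ)
        (Set.pi univ (fun i => (Fi i) ×ˢ Ioo ((q (A i) : ℝ)) ((r (A i) : ℝ)))) ≠ 0 := by
      rw [Measure.pi_pi]
      rw [Finset.prod_ne_zero_iff]
      intro i _
      exact hbox i
    exact hprod (le_antisymm (le_trans (measure_mono hsub) (le_of_eq havoid)) zero_le)
  -- now deduce the a.e. statement by a countable covering argument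
  rw [ae_iff, Measure.restrict_apply' measurableSet_Icc]
  set D := {d : ((Fin k → ℚ) × (Fin k → ℚ)) × ℕ |
    (∀ m, d.1.1 m < d.1.2 m) ∧ ∀ m m' : Fin k, m < m' → d.1.2 m ≤ d.1.1 m'} with hD
  have hcov : {x : ℝ | ¬ ∃ P : Finset ℝ, P.card ≤ k - 1 ∧ Γx x ((↑P : Set ℝ)ᶜ) = 0}
        ∩ Icc 0 1 ⊆
      ⋃ d : D, ({x : ℝ | ∀ m,
        (((d : ((Fin k → ℚ) × (Fin k → ℚ)) × ℕ).2 : ℝ≥0∞) + 1)⁻¹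
          ≤ Γx x (Ioo ((d : ((Fin k → ℚ) × (Fin k → ℚ)) × ℕ).1.1 m : ℝ)
            ((d : ((Fin k → ℚ) × (Fin k → ℚ)) × ℕ).1.2 m))} ∩ Icc 0 1) := by
    rintro x ⟨hbad, hx01⟩
    simp only [mem_setOf_eq] at hbad
    set μ := Γx x with hμ
    -- the "support" of μ
    set S : Set ℝ := {y : ℝ | ∀ a b : ℚ, (a : ℝ) < y → y < (b : ℝ) → 0 < μ (Ioo (a : ℝ) (b : ℝ))}
      with hS
    have hScompl : μ Sᶜ = 0 := by
      have hsub : Sᶜ ⊆ ⋃ p : {p : ℚ × ℚ // μ (Ioo (p.1 : ℝ) (p.2 : ℝ)) = 0},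
          Ioo ((p : ℚ × ℚ).1 : ℝ) ((p : ℚ × ℚ).2 : ℝ) := by
        intro y hy
        simp only [hS, mem_compl_iff, mem_setOf_eq, not_forall] at hy
        obtain ⟨a, b, ha, hb, h0⟩ := hy
        have h0' : μ (Ioo (a : ℝ) (b : ℝ)) = 0 := by
          simpa [pos_iff_ne_zero] using h0
        exact mem_iUnion.2 ⟨⟨(a, b), h0'⟩, ha, hb⟩
      exact measure_mono_null hsub (measure_iUnion_null fun p => p.2)
    -- extract `k` points of the support
    have hF : ∃ F : Finset ℝ, (↑F : Set ℝ) ⊆ S ∧ F.card = k := by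
      by_cases hfin : S.Finite
      · by_cases hc : hfin.toFinset.card ≤ k - 1
        · exfalso
          apply hbad
          refine ⟨hfin.toFinset, hc, ?_⟩
          have : (↑hfin.toFinset : Set ℝ)ᶜ = Sᶜ := by
            rw [Set.Finite.coe_toFinset]
          rw [this]
          exact hScompl
        · have hk : k ≤ hfin.toFinset.card := by omega
          obtain ⟨F, hFsub, hFcard⟩ := Finset.exists_subset_card_eq hk
          exact ⟨F, by
            intro y hy
            have := hFsub hy
            rwa [Set.Finite.mem_toFinset] at this, hFcard⟩
      · obtain ⟨F, hFsub, hFcard⟩ := Set.Infinite.exists_subset_card_eq hfin k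
        exact ⟨F, hFsub, hFcard⟩
    obtain ⟨F, hFsub, hFcard⟩ := hF
    set y : Fin k → ℝ := fun m => ((F.orderIsoOfFin hFcard m : ℝ)) with hy
    have hymono : StrictMono y := by
      intro m m' hmm
      exact_mod_cast (F.orderIsoOfFin hFcard).strictMono hmm
    have hyS : ∀ m, y m ∈ S := fun m => hFsub (F.orderIsoOfFin hFcard m).2
    obtain ⟨δ, hδpos, hδ⟩ := gap_lemma y hymono
    have hq : ∀ m : Fin k, ∃ a : ℚ, y m - δ < (a : ℝ) ∧ (a : ℝ) < y m :=
      fun m => exists_rat_btwn (by linarith)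
    have hr : ∀ m : Fin k, ∃ b : ℚ, y m < (b : ℝ) ∧ (b : ℝ) < y m + δ :=
      fun m => exists_rat_btwn (by linarith)
    choose q hq1 hq2 using hq
    choose r hr1 hr2 using hr
    have hord1 : ∀ m, q m < r m := by
      intro m
      have : (q m : ℝ) < (r m : ℝ) := lt_trans (hq2 m) (hr1 m)
      exact_mod_cast this
    have hord2 : ∀ m m' : Fin k, m < m' → r m ≤ q m' := by
      intro m m' hmm
      have hgap := hδ m m' hmm
      have h1 : (r m : ℝ) < y m + δ := hr2 m
      have h2 : y m' - δ < (q m' : ℝ) := hq1 m'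
      have : (r m : ℝ) ≤ (q m' : ℝ) := by linarith
      exact_mod_cast this
    have hmass : ∀ m, 0 < μ (Ioo ((q m : ℝ)) ((r m : ℝ))) :=
      fun m => hyS m (q m) (r m) (hq2 m) (hr1 m)
    have hn : ∀ m : Fin k, ∃ n : ℕ, ((n : ℝ≥0∞) + 1)⁻¹ ≤ μ (Ioo ((q m : ℝ)) ((r m : ℝ))) := by
      intro m
      obtain ⟨n, hn⟩ := ENNReal.exists_inv_nat_lt (pos_iff_ne_zero.1 (hmass m))
      refine ⟨n, le_trans ?_ (le_of_lt hn)⟩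
      rw [ENNReal.inv_le_inv]
      exact le_self_add
    choose nf hnf using hn
    set n := Finset.univ.sup nf with hn'
    have hnall : ∀ m, ((n : ℝ≥0∞) + 1)⁻¹ ≤ μ (Ioo ((q m : ℝ)) ((r m : ℝ))) := by
      intro m
      refine le_trans ?_ (hnf m)
      rw [ENNReal.inv_le_inv]
      have : nf m ≤ n := Finset.le_sup (Finset.mem_univ m)
      have : ((nf m : ℝ≥0∞)) ≤ (n : ℝ≥0∞) := by exact_mod_cast this
      exact add_le_add this le_rfl
    refine mem_iUnion.2 ⟨⟨((q, r), n), hord1, hord2⟩, ?_, hx01⟩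
    exact hnall
  refine measure_mono_null hcov (measure_iUnion_null ?_)
  rintro ⟨⟨⟨q, r⟩, n⟩, hd1, hd2⟩
  exact key q r n hd1 hd2
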